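/- Let B be a real N×N matrix and η ∈ ℝ. Then exp(ηB) − I is not invertible if and only if there exists a complex eigenvalue λ of the complexification of B with exp(ηλ) = 1. -/

import Mathlib

open Matrix

private lemma pow_mulVec_eig {N : ℕ} (A : Matrix (Fin N) (Fin N) ℂ) (v : Fin N → ℂ) (μ : ℂ)
    (h : A.mulVec v = μ • v) (k : ℕ) : (A ^ k).mulVec v = (μ ^ k) • v := by
  induction k with
  | zero => simp
  | succ k ih =>
    rw [pow_succ', ← Matrix.mulVec_mulVec, ih, Matrix.mulVec_smul, h, smul_smul, ← pow_succ]

private lemma exp_mulVec_eig {N : ℕ} (A : Matrix (Fin N) (Fin N) ℂ) (v : Fin N → ℂ) (μ : ℂ)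
    (h : A.mulVec v = μ • v) :
    (NormedSpace.exp A).mulVec v = Complex.exp μ • v := by
  letI : SeminormedRing (Matrix (Fin N) (Fin N) ℂ) := Matrix.linftyOpSemiNormedRing
  letI : NormedRing (Matrix (Fin N) (Fin N) ℂ) := Matrix.linftyOpNormedRing
  letI : NormedAlgebra ℂ (Matrix (Fin N) (Fin N) ℂ) := Matrix.linftyOpNormedAlgebra
  have hA := NormedSpace.exp_series_hasSum_exp' (𝕂 := ℂ) A
  let f : Matrix (Fin N) (Fin N) ℂ →ₗ[ℂ] (Fin N → ℂ) :=
    { toFun := fun M => M.mulVec v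
      map_add' := fun M₁ M₂ => Matrix.add_mulVec _ _ _
      map_smul' := fun c M => by simpa using Matrix.smul_mulVec c M v }
  have hf : Continuous f := f.continuous_of_finiteDimensional
  have h1 : HasSum (fun n : ℕ => f ((n.factorial⁻¹ : ℂ) • A ^ n)) (f (NormedSpace.exp A)) :=
    hA.map f.toAddMonoidHom hf
  have h2 : HasSum (fun n : ℕ => ((n.factorial⁻¹ : ℂ) * μ ^ n) • v) (Complex.exp μ • v) := by
    have := (NormedSpace.exp_series_hasSum_exp' (𝕂 := ℂ) μ).smul_const v
    simpa [smul_eq_mul, Complex.exp_eq_exp_ℂ] using this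
  have heq : ∀ n : ℕ, f ((n.factorial⁻¹ : ℂ) • A ^ n) = ((n.factorial⁻¹ : ℂ) * μ ^ n) • v := by
    intro n
    show ((n.factorial⁻¹ : ℂ) • A ^ n).mulVec v = _
    rw [Matrix.smul_mulVec, pow_mulVec_eig A v μ h n, smul_smul]
  simp only [heq] at h1
  exact h1.unique h2

private lemma exp_eq_aeval {N : ℕ} (A : Matrix (Fin N) (Fin N) ℂ) :
    ∃ p : Polynomial ℂ, Polynomial.aeval A p = NormedSpace.exp A := by
  letI : SeminormedRing (Matrix (Fin N) (Fin N) ℂ) := Matrix.linftyOpSemiNormedRing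
  letI : NormedRing (Matrix (Fin N) (Fin N) ℂ) := Matrix.linftyOpNormedRing
  letI : NormedAlgebra ℂ (Matrix (Fin N) (Fin N) ℂ) := Matrix.linftyOpNormedAlgebra
  have hA := NormedSpace.exp_series_hasSum_exp' (𝕂 := ℂ) A
  have hmem : NormedSpace.exp A ∈ (Algebra.adjoin ℂ {A}).toSubmodule := by
    have hclosed : IsClosed ((Algebra.adjoin ℂ {A}).toSubmodule : Set (Matrix (Fin N) (Fin N) ℂ)) :=
      Submodule.closed_of_finiteDimensional _
    refine hclosed.mem_of_tendsto hA.tendsto_sum_nat (Filter.Eventually.of_forall fun n => ?_)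
    exact Submodule.sum_mem _ fun k _ =>
      Submodule.smul_mem _ _ (Subalgebra.pow_mem _ (Algebra.self_mem_adjoin_singleton ℂ A) k)
  rw [Subalgebra.mem_toSubmodule, Algebra.adjoin_singleton_eq_range_aeval, AlgHom.mem_range] at hmem
  exact hmem

private lemma aeval_mulVec_eig {N : ℕ} (A : Matrix (Fin N) (Fin N) ℂ) (v : Fin N → ℂ) (μ : ℂ)
    (h : A.mulVec v = μ • v) (p : Polynomial ℂ) :
    (Polynomial.aeval A p).mulVec v = p.eval μ • v := by
  induction p using Polynomial.induction_on' with
  | add p q hp hq => simp [Matrix.add_mulVec, hp, hq, add_smul]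
  | monomial n c =>
    rw [Polynomial.aeval_monomial, Algebra.algebraMap_eq_smul_one, smul_mul_assoc, one_mul,
      Matrix.smul_mulVec, pow_mulVec_eig A v μ h n, Polynomial.eval_monomial, smul_smul]

private lemma exists_eigvec_of_not_isUnit {N : ℕ} {C : Matrix (Fin N) (Fin N) ℂ}
    (hC : ¬ IsUnit C) : ∃ v ≠ 0, C.mulVec v = 0 := by
  rw [Matrix.exists_mulVec_eq_zero_iff]
  rw [Matrix.isUnit_iff_isUnit_det, isUnit_iff_ne_zero, not_not] at hC
  exact hC

private lemma exists_eigenvalue {N : ℕ} (hN : 0 < N) (C : Matrix (Fin N) (Fin N) ℂ) :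
    ∃ (μ : ℂ) (v : Fin N → ℂ), v ≠ 0 ∧ C.mulVec v = μ • v := by
  haveI : Nonempty (Fin N) := ⟨⟨0, hN⟩⟩
  obtain ⟨μ, hμ⟩ := spectrum.nonempty_of_isAlgClosed_of_finiteDimensional ℂ C
  rw [spectrum.mem_iff] at hμ
  obtain ⟨v, hv0, hv⟩ := exists_eigvec_of_not_isUnit hμ
  refine ⟨μ, v, hv0, ?_⟩
  rw [Algebra.algebraMap_eq_smul_one, Matrix.sub_mulVec, Matrix.smul_mulVec,
    Matrix.one_mulVec, sub_eq_zero] at hv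
  exact hv.symm

private lemma map_exp_complex {N : ℕ} (C : Matrix (Fin N) (Fin N) ℝ) :
    (NormedSpace.exp C).map (fun x => (x : ℂ)) =
      NormedSpace.exp (C.map (fun x => (x : ℂ))) := by
  letI : SeminormedRing (Matrix (Fin N) (Fin N) ℝ) := Matrix.linftyOpSemiNormedRing
  letI : NormedRing (Matrix (Fin N) (Fin N) ℝ) := Matrix.linftyOpNormedRing
  letI : NormedAlgebra ℝ (Matrix (Fin N) (Fin N) ℝ) := Matrix.linftyOpNormedAlgebra
  letI : NormedAlgebra ℚ (Matrix (Fin N) (Fin N) ℝ) := NormedAlgebra.restrictScalars ℚ ℝ _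
  letI : SeminormedRing (Matrix (Fin N) (Fin N) ℂ) := Matrix.linftyOpSemiNormedRing
  letI : NormedRing (Matrix (Fin N) (Fin N) ℂ) := Matrix.linftyOpNormedRing
  letI : NormedAlgebra ℝ (Matrix (Fin N) (Fin N) ℂ) := Matrix.linftyOpNormedAlgebra
  let F : Matrix (Fin N) (Fin N) ℝ →+* Matrix (Fin N) (Fin N) ℂ :=
    Complex.ofRealHom.mapMatrix
  have hF : Continuous F := continuous_id.matrix_map Complex.continuous_ofReal
  have := NormedSpace.map_exp F hF C
  have h2 : (NormedSpace.exp (F C) : Matrix (Fin N) (Fin N) ℂ) = NormedSpace.exp (F C) := by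
    rfl
  exact this.trans h2

private lemma map_sub_one_complex {N : ℕ} (C : Matrix (Fin N) (Fin N) ℝ) :
    (C - 1).map (fun x => (x : ℂ)) = C.map (fun x => (x : ℂ)) - 1 := by
  ext i j
  simp [Matrix.map_apply, Matrix.sub_apply, Matrix.one_apply, apply_ite Complex.ofReal]

private lemma det_map_complex {N : ℕ} (C : Matrix (Fin N) (Fin N) ℝ) :
    (C.map (fun x => (x : ℂ))).det = (C.det : ℂ) :=
  (RingHom.map_det Complex.ofRealHom C).symm

/-- For a real `N × N` matrix `B` and `η ∈ ℝ`, the matrix `exp(ηB) − I`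
fails to be invertible if and only if the complexification of `B` has a complex eigenvalue `μ`
with `exp(ημ) = 1`. -/
theorem stmt_2 (N : ℕ) (B : Matrix (Fin N) (Fin N) ℝ) (η : ℝ) :
    ¬ IsUnit (NormedSpace.exp (η • B) - 1) ↔
      ∃ (μ : ℂ) (v : Fin N → ℂ), v ≠ 0 ∧
        (B.map (fun x => (x : ℂ))).mulVec v = μ • v ∧ Complex.exp (η * μ) = 1 := by
  rcases Nat.eq_zero_or_pos N with hN | hN
  · subst hN
    constructor
    · intro h; exact absurd (isUnit_of_subsingleton _) h
    · rintro ⟨μ, v, hv, -, -⟩; exact absurd (Subsingleton.elim v 0) hv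
  haveI : Nonempty (Fin N) := ⟨⟨0, hN⟩⟩
  set M : Matrix (Fin N) (Fin N) ℂ := B.map (fun x => (x : ℂ)) with hM
  have hmap : (η • B).map (fun x => (x : ℂ)) = (η : ℂ) • M := by
    ext i j
    simp [hM, Matrix.map_apply, Matrix.smul_apply, Complex.ofReal_mul]
  have hbridge : (NormedSpace.exp (η • B)).map (fun x => (x : ℂ)) =
      NormedSpace.exp ((η : ℂ) • M) := by
    rw [map_exp_complex, hmap]
  have hdeteq : (NormedSpace.exp ((η : ℂ) • M) - 1).det
      = ((NormedSpace.exp (η • B) - 1).det : ℂ) := by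
    rw [← hbridge, ← map_sub_one_complex, det_map_complex]
  have hdet : ¬ IsUnit (NormedSpace.exp (η • B) - 1) ↔
      (NormedSpace.exp ((η : ℂ) • M) - 1).det = 0 := by
    rw [Matrix.isUnit_iff_isUnit_det, isUnit_iff_ne_zero, not_not, hdeteq,
      Complex.ofReal_eq_zero]
  rw [hdet]
  constructor
  · intro hdet0
    rcases eq_or_ne η 0 with hη | hη
    · obtain ⟨μ, v, hv0, hMv⟩ := exists_eigenvalue hN M
      exact ⟨μ, v, hv0, hMv, by simp [hη]⟩
    · have hη' : (η : ℂ) ≠ 0 := Complex.ofReal_ne_zero.mpr hη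
      have hnotunit : ¬ IsUnit (NormedSpace.exp ((η : ℂ) • M) - 1) := by
        rw [Matrix.isUnit_iff_isUnit_det, isUnit_iff_ne_zero, not_not]; exact hdet0
      have h1spec : (1 : ℂ) ∈ spectrum ℂ (NormedSpace.exp ((η : ℂ) • M)) := by
        rw [spectrum.mem_iff, _root_.map_one]
        intro hu
        exact hnotunit (by simpa [neg_sub] using hu.neg)
      obtain ⟨p, hp⟩ := exp_eq_aeval ((η : ℂ) • M)
      have hspecA : (spectrum ℂ ((η : ℂ) • M)).Nonempty :=
        spectrum.nonempty_of_isAlgClosed_of_finiteDimensional ℂ _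
      have hmapspec := spectrum.map_polynomial_aeval_of_nonempty ((η : ℂ) • M) p hspecA
      rw [hp] at hmapspec
      rw [hmapspec] at h1spec
      obtain ⟨lam, hlamspec, hlam⟩ := h1spec
      have hlam' : Polynomial.eval lam p = 1 := hlam
      rw [spectrum.mem_iff] at hlamspec
      obtain ⟨u, hu0, hu⟩ := exists_eigvec_of_not_isUnit hlamspec
      have hAu : ((η : ℂ) • M).mulVec u = lam • u := by
        rw [Algebra.algebraMap_eq_smul_one, Matrix.sub_mulVec, Matrix.smul_mulVec,
          Matrix.one_mulVec, sub_eq_zero] at hu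
        exact hu.symm
      have he1 := exp_mulVec_eig _ u lam hAu
      have he2 := aeval_mulVec_eig _ u lam hAu p
      rw [hp, he1, hlam', one_smul] at he2
      have hexp : Complex.exp lam = 1 := by
        by_contra hne
        have hz : (Complex.exp lam - 1) • u = 0 := by
          rw [sub_smul, he2, one_smul, sub_self]
        rcases smul_eq_zero.mp hz with h | h
        · exact hne (sub_eq_zero.mp h)
        · exact hu0 h
      refine ⟨lam / η, u, hu0, ?_, ?_⟩
      · have hsm : (η : ℂ) • M.mulVec u = lam • u := by
          rwa [Matrix.smul_mulVec] at hAu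
        calc M.mulVec u = (η : ℂ)⁻¹ • ((η : ℂ) • M.mulVec u) := (inv_smul_smul₀ hη' _).symm
          _ = (η : ℂ)⁻¹ • (lam • u) := by rw [hsm]
          _ = (lam / η) • u := by rw [smul_smul, div_eq_inv_mul]
      · rw [mul_comm, div_mul_cancel₀ lam hη']
        exact hexp
  · rintro ⟨μ, v, hv0, hMv, hexpμ⟩
    have hAv : ((η : ℂ) • M).mulVec v = ((η : ℂ) * μ) • v := by
      rw [Matrix.smul_mulVec, hMv, smul_smul]
    have hev := exp_mulVec_eig _ v ((η : ℂ) * μ) hAv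
    rw [hexpμ, one_smul] at hev
    rw [← Matrix.exists_mulVec_eq_zero_iff]
    exact ⟨v, hv0, by rw [Matrix.sub_mulVec, hev, Matrix.one_mulVec, sub_self]⟩
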